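/- arXiv:2007.06614 — 3 statements merged into one kernel-verified Lean document; each statement's English description precedes it below -/
import Mathlib

section
/- Let A be an n×n SPD matrix and P an n×n_c matrix of full column rank. Then the smallest eigenvalue λ of A satisfies λ ≤ λ_c · ‖(PᵗP)⁻¹‖, where λ_c is the smallest eigenvalue of PᵗAP. Equivalently, ‖(PᵗAP)⁻¹‖ ≤ ‖A⁻¹‖ · ‖(PᵗP)⁻¹‖. -/
open Matrix

noncomputable def vnorm {n : ℕ} (x : Fin n → ℝ) : ℝ := Real.sqrt (x ⬝ᵥ x)

noncomputable def enorm {n : ℕ} (A : Matrix (Fin n) (Fin n) ℝ) (x : Fin n → ℝ) : ℝ :=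
  Real.sqrt (A.mulVec x ⬝ᵥ x)

noncomputable def specNorm {m n : ℕ} (M : Matrix (Fin m) (Fin n) ℝ) : ℝ :=
  ⨆ x : {x : Fin n → ℝ // vnorm x = 1}, vnorm (M.mulVec x.1)

noncomputable def eOpNorm {n : ℕ} (A M : Matrix (Fin n) (Fin n) ℝ) : ℝ :=
  ⨆ x : {x : Fin n → ℝ // enorm A x = 1}, enorm A (M.mulVec x.1)

/-- P has full column rank. -/
def FullColRank {n nc : ℕ} (P : Matrix (Fin n) (Fin nc) ℝ) : Prop :=
  LinearIndependent ℝ (fun j : Fin nc => (fun i : Fin n => P i j))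

lemma dot_self_nonneg {n : ℕ} (x : Fin n → ℝ) : 0 ≤ x ⬝ᵥ x :=
  Finset.sum_nonneg fun i _ => mul_self_nonneg _

lemma vnorm_nonneg {n : ℕ} (x : Fin n → ℝ) : 0 ≤ vnorm x := Real.sqrt_nonneg _

lemma vnorm_sq {n : ℕ} (x : Fin n → ℝ) : vnorm x * vnorm x = x ⬝ᵥ x :=
  Real.mul_self_sqrt (dot_self_nonneg x)

lemma vnorm_zero {n : ℕ} : vnorm (0 : Fin n → ℝ) = 0 := by
  simp [vnorm]

lemma vnorm_smul {n : ℕ} (c : ℝ) (x : Fin n → ℝ) : vnorm (c • x) = |c| * vnorm x := by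
  unfold vnorm
  rw [smul_dotProduct, dotProduct_smul, smul_eq_mul, smul_eq_mul, ← mul_assoc,
    ← Real.sqrt_sq_eq_abs, ← Real.sqrt_mul (sq_nonneg c)]
  ring_nf

/-- Cauchy–Schwarz for the dot product. -/
lemma dot_le_vnorm_mul {n : ℕ} (x y : Fin n → ℝ) : x ⬝ᵥ y ≤ vnorm x * vnorm y := by
  have h : (x ⬝ᵥ y) ^ 2 ≤ (x ⬝ᵥ x) * (y ⬝ᵥ y) := by
    have := Finset.sum_mul_sq_le_sq_mul_sq Finset.univ x y
    simpa [dotProduct, sq, Finset.mul_sum] using this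
  calc x ⬝ᵥ y ≤ |x ⬝ᵥ y| := le_abs_self _
    _ = Real.sqrt ((x ⬝ᵥ y) ^ 2) := (Real.sqrt_sq_eq_abs _).symm
    _ ≤ Real.sqrt ((x ⬝ᵥ x) * (y ⬝ᵥ y)) := Real.sqrt_le_sqrt h
    _ = vnorm x * vnorm y := by rw [Real.sqrt_mul (dot_self_nonneg x)]; rfl

lemma specNorm_bdd {m n : ℕ} (M : Matrix (Fin m) (Fin n) ℝ) :
    BddAbove (Set.range fun x : {x : Fin n → ℝ // vnorm x = 1} => vnorm (M.mulVec x.1)) := by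
  refine ⟨Real.sqrt (∑ i, ∑ j, M i j ^ 2), ?_⟩
  rintro _ ⟨⟨x, hx⟩, rfl⟩
  have hmain : M.mulVec x ⬝ᵥ M.mulVec x ≤ (∑ i, ∑ j, M i j ^ 2) * (x ⬝ᵥ x) := by
    have h1 : ∀ i, (M.mulVec x i) * (M.mulVec x i) ≤ (∑ j, M i j ^ 2) * (x ⬝ᵥ x) := by
      intro i
      have := Finset.sum_mul_sq_le_sq_mul_sq Finset.univ (fun j => M i j) x
      simpa [mulVec, dotProduct, sq] using this
    calc M.mulVec x ⬝ᵥ M.mulVec x = ∑ i, (M.mulVec x i) * (M.mulVec x i) := rfl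
      _ ≤ ∑ i, (∑ j, M i j ^ 2) * (x ⬝ᵥ x) := Finset.sum_le_sum fun i _ => h1 i
      _ = (∑ i, ∑ j, M i j ^ 2) * (x ⬝ᵥ x) := by rw [Finset.sum_mul]
  have : vnorm (M.mulVec x) ≤ Real.sqrt ((∑ i, ∑ j, M i j ^ 2) * (x ⬝ᵥ x)) :=
    Real.sqrt_le_sqrt hmain
  calc vnorm (M.mulVec x) ≤ Real.sqrt ((∑ i, ∑ j, M i j ^ 2) * (x ⬝ᵥ x)) := this
    _ = Real.sqrt (∑ i, ∑ j, M i j ^ 2) * vnorm x := by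
        rw [Real.sqrt_mul (by positivity)]; rfl
    _ = Real.sqrt (∑ i, ∑ j, M i j ^ 2) := by rw [hx, mul_one]

lemma specNorm_nonneg {m n : ℕ} (M : Matrix (Fin m) (Fin n) ℝ) : 0 ≤ specNorm M :=
  Real.iSup_nonneg fun x => vnorm_nonneg _

lemma vnorm_mulVec_le {m n : ℕ} (M : Matrix (Fin m) (Fin n) ℝ) (x : Fin n → ℝ) :
    vnorm (M.mulVec x) ≤ specNorm M * vnorm x := by
  by_cases hx : x = 0
  · simp [hx, vnorm_zero]
  · have hd : 0 < x ⬝ᵥ x := by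
      rcases (dot_self_nonneg x).lt_or_eq with h | h
      · exact h
      · exact absurd (dotProduct_self_eq_zero.mp h.symm) hx
    have hv : 0 < vnorm x := Real.sqrt_pos.mpr hd
    set u : Fin n → ℝ := (vnorm x)⁻¹ • x with hu_def
    have hu : vnorm u = 1 := by
      rw [hu_def, vnorm_smul, abs_of_pos (inv_pos.mpr hv), inv_mul_cancel₀ hv.ne']
    have hle : vnorm (M.mulVec u) ≤ specNorm M :=
      le_ciSup (specNorm_bdd M) (⟨u, hu⟩ : {x : Fin n → ℝ // vnorm x = 1})
    have hMu : M.mulVec u = (vnorm x)⁻¹ • M.mulVec x := by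
      rw [hu_def, mulVec_smul]
    rw [hMu, vnorm_smul, abs_of_pos (inv_pos.mpr hv)] at hle
    calc vnorm (M.mulVec x) = vnorm x * ((vnorm x)⁻¹ * vnorm (M.mulVec x)) := by
          field_simp
      _ ≤ vnorm x * specNorm M := by
          exact mul_le_mul_of_nonneg_left hle hv.le
      _ = specNorm M * vnorm x := mul_comm _ _

/-- Cauchy–Schwarz for a positive semidefinite bilinear form. -/
lemma psd_cs {n : ℕ} {S : Matrix (Fin n) (Fin n) ℝ} (hS : S.PosSemidef) (u v : Fin n → ℝ) :
    (u ⬝ᵥ S.mulVec v) ^ 2 ≤ (u ⬝ᵥ S.mulVec u) * (v ⬝ᵥ S.mulVec v) := by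
  have hsymm : ∀ a b : Fin n → ℝ, a ⬝ᵥ S.mulVec b = b ⬝ᵥ S.mulVec a := by
    intro a b
    have hS' : Sᵀ = S := by
      have := hS.1
      rwa [IsHermitian, conjTranspose_eq_transpose_of_trivial] at this
    rw [dotProduct_mulVec, dotProduct_comm]
    congr 1
    conv_lhs => rw [← hS']
    exact vecMul_transpose S a
  have key : ∀ t : ℝ, 0 ≤ (v ⬝ᵥ S.mulVec v) * (t * t) + (2 * (u ⬝ᵥ S.mulVec v)) * t
      + (u ⬝ᵥ S.mulVec u) := by
    intro t
    have h := (posSemidef_iff_dotProduct_mulVec.mp hS).2 (u + t • v)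
    have hstar : star (u + t • v) = u + t • v := by
      simp
    rw [hstar] at h
    have hexp : (u + t • v) ⬝ᵥ S.mulVec (u + t • v)
        = (v ⬝ᵥ S.mulVec v) * (t * t) + (2 * (u ⬝ᵥ S.mulVec v)) * t + (u ⬝ᵥ S.mulVec u) := by
      simp only [mulVec_add, mulVec_smul, add_dotProduct, dotProduct_add, smul_dotProduct,
        dotProduct_smul, smul_eq_mul, hsymm v u]
      ring
    rw [hexp] at h
    exact_mod_cast h
  have hdisc := discrim_le_zero key
  rw [discrim] at hdisc
  nlinarith [hdisc]

lemma key_ineq {n : ℕ} {S : Matrix (Fin n) (Fin n) ℝ} (hS : S.PosDef) (x : Fin n → ℝ) :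
    x ⬝ᵥ x ≤ specNorm S⁻¹ * (x ⬝ᵥ S.mulVec x) := by
  have hdet : IsUnit S.det := (ne_of_gt hS.det_pos).isUnit
  have hSS : S * S⁻¹ = 1 := mul_nonsing_inv _ hdet
  have hxx : S.mulVec (S⁻¹.mulVec x) = x := by
    rw [mulVec_mulVec, hSS, one_mulVec]
  have hcs := psd_cs hS.posSemidef x (S⁻¹.mulVec x)
  rw [hxx] at hcs
  have h4 : (S⁻¹.mulVec x) ⬝ᵥ x ≤ specNorm S⁻¹ * (x ⬝ᵥ x) :=
    calc (S⁻¹.mulVec x) ⬝ᵥ x ≤ vnorm (S⁻¹.mulVec x) * vnorm x := dot_le_vnorm_mul _ _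
      _ ≤ (specNorm S⁻¹ * vnorm x) * vnorm x :=
          mul_le_mul_of_nonneg_right (vnorm_mulVec_le _ _) (vnorm_nonneg _)
      _ = specNorm S⁻¹ * (x ⬝ᵥ x) := by rw [mul_assoc, vnorm_sq]
  have hq : 0 ≤ x ⬝ᵥ S.mulVec x := by
    have := (posSemidef_iff_dotProduct_mulVec.mp hS.posSemidef).2 x
    simpa using this
  have hC : 0 ≤ specNorm S⁻¹ := specNorm_nonneg _
  rcases (dot_self_nonneg x).lt_or_eq with hd | hd
  · nlinarith [hcs, h4, hd, hq, hC]
  · rw [← hd]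
    exact mul_nonneg hC hq

lemma dot_transpose {n nc : ℕ} (P : Matrix (Fin n) (Fin nc) ℝ) (x : Fin nc → ℝ)
    (w : Fin n → ℝ) : x ⬝ᵥ Pᵀ.mulVec w = P.mulVec x ⬝ᵥ w := by
  rw [dotProduct_mulVec, vecMul_transpose]

theorem stmt4 {n nc : ℕ} (A : Matrix (Fin n) (Fin n) ℝ) (P : Matrix (Fin n) (Fin nc) ℝ)
    (hA : A.PosDef) (hP : FullColRank P) :
    specNorm (Pᵀ * A * P)⁻¹ ≤ specNorm A⁻¹ * specNorm (Pᵀ * P)⁻¹ := by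
  set M := Pᵀ * A * P with hM_def
  set B := Pᵀ * P with hB_def
  have hAT : Aᵀ = A := by
    have := hA.1
    rwa [IsHermitian, conjTranspose_eq_transpose_of_trivial] at this
  -- injectivity of P
  have hPinj : ∀ x : Fin nc → ℝ, P.mulVec x = 0 → x = 0 := by
    intro x hx
    have h := Fintype.linearIndependent_iff.mp hP x
    have hsum : ∑ j, x j • (fun i : Fin n => P i j) = 0 := by
      funext i
      have hxi : P.mulVec x i = 0 := by rw [hx]; rfl
      simp only [Finset.sum_apply, Pi.smul_apply, smul_eq_mul, Pi.zero_apply]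
      rw [← hxi]
      simp [mulVec, dotProduct, mul_comm]
    funext j
    exact h hsum j
  -- M and B mulVec identities
  have hMmul : ∀ z : Fin nc → ℝ, M.mulVec z = Pᵀ.mulVec (A.mulVec (P.mulVec z)) := by
    intro z
    rw [hM_def, mulVec_mulVec, mulVec_mulVec, Matrix.mul_assoc]
  have hBmul : ∀ z : Fin nc → ℝ, B.mulVec z = Pᵀ.mulVec (P.mulVec z) := by
    intro z
    rw [hB_def, mulVec_mulVec]
  -- B is positive definite
  have hB : B.PosDef := by
    rw [posDef_iff_dotProduct_mulVec]
    constructor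
    · rw [IsHermitian, conjTranspose_eq_transpose_of_trivial, hB_def, transpose_mul,
        transpose_transpose]
    · intro x hx
      have hPx : P.mulVec x ≠ 0 := fun h => hx (hPinj x h)
      have : 0 < P.mulVec x ⬝ᵥ P.mulVec x := by
        rcases (dot_self_nonneg (P.mulVec x)).lt_or_eq with h | h
        · exact h
        · exact absurd (dotProduct_self_eq_zero.mp h.symm) hPx
      have heq : x ⬝ᵥ B.mulVec x = P.mulVec x ⬝ᵥ P.mulVec x := by
        rw [hBmul, dot_transpose]
      simpa [heq] using this
  -- M is positive definite
  have hM : M.PosDef := by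
    rw [posDef_iff_dotProduct_mulVec]
    constructor
    · rw [IsHermitian, conjTranspose_eq_transpose_of_trivial, hM_def, transpose_mul,
        transpose_mul, transpose_transpose, hAT, Matrix.mul_assoc]
    · intro x hx
      have hPx : P.mulVec x ≠ 0 := fun h => hx (hPinj x h)
      have hpos : 0 < star (P.mulVec x) ⬝ᵥ A.mulVec (P.mulVec x) := (posDef_iff_dotProduct_mulVec.mp hA).2 hPx
      have heq : x ⬝ᵥ M.mulVec x = P.mulVec x ⬝ᵥ A.mulVec (P.mulVec x) := by
        rw [hMmul, dot_transpose]
      simp only [star_trivial]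
      rw [heq]
      simpa using hpos
  have hdetM : IsUnit M.det := (ne_of_gt hM.det_pos).isUnit
  have hMM : M * M⁻¹ = 1 := mul_nonsing_inv _ hdetM
  have hCA : 0 ≤ specNorm A⁻¹ := specNorm_nonneg _
  have hCB : 0 ≤ specNorm B⁻¹ := specNorm_nonneg _
  apply Real.iSup_le _ (mul_nonneg hCA hCB)
  rintro ⟨u, hu⟩
  set z := M⁻¹.mulVec u with hz_def
  have hMz : M.mulVec z = u := by
    rw [hz_def, mulVec_mulVec, hMM, one_mulVec]
  have h1 : z ⬝ᵥ z ≤ specNorm B⁻¹ * (P.mulVec z ⬝ᵥ P.mulVec z) := by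
    have := key_ineq hB z
    rwa [hBmul, dot_transpose] at this
  have h2 : P.mulVec z ⬝ᵥ P.mulVec z ≤ specNorm A⁻¹ * (z ⬝ᵥ u) := by
    have := key_ineq hA (P.mulVec z)
    have heq : P.mulVec z ⬝ᵥ A.mulVec (P.mulVec z) = z ⬝ᵥ u := by
      rw [← dot_transpose, ← hMmul, hMz]
    rwa [heq] at this
  have h3 : z ⬝ᵥ u ≤ vnorm z := by
    calc z ⬝ᵥ u ≤ vnorm z * vnorm u := dot_le_vnorm_mul _ _
      _ = vnorm z := by rw [hu, mul_one]
  have hfinal : vnorm z * vnorm z ≤ (specNorm A⁻¹ * specNorm B⁻¹) * vnorm z := by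
    rw [vnorm_sq]
    calc z ⬝ᵥ z ≤ specNorm B⁻¹ * (P.mulVec z ⬝ᵥ P.mulVec z) := h1
      _ ≤ specNorm B⁻¹ * (specNorm A⁻¹ * (z ⬝ᵥ u)) :=
          mul_le_mul_of_nonneg_left h2 hCB
      _ ≤ specNorm B⁻¹ * (specNorm A⁻¹ * vnorm z) := by
          exact mul_le_mul_of_nonneg_left (mul_le_mul_of_nonneg_left h3 hCA) hCB
      _ = (specNorm A⁻¹ * specNorm B⁻¹) * vnorm z := by ring
  rcases (vnorm_nonneg z).lt_or_eq with hv | hv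
  · exact le_of_mul_le_mul_right (by linarith [hfinal]) hv
  · rw [← hv]
    exact mul_nonneg hCA hCB
end

section
/- Let A be an n×n SPD matrix, P an n×n_c matrix of full column rank, b ∈ ℝⁿ, b_c = Pᵗb, A_c = PᵗAP. Suppose ‖x_c − A_c⁻¹ b_c‖_{A_c} ≤ C h_c^q ‖A_c⁻¹ b_c‖_{A_c} and ‖P A_c⁻¹ b_c − A⁻¹ b‖_A ≤ C h_c^q ‖A⁻¹b‖_A for constants C, h_c, q > 0. Then ‖P x_c − A⁻¹ b‖_A ≤ √2 · C h_c^q · ‖A⁻¹ b‖_A. -/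
open Matrix

private lemma dot_aux {m k : ℕ} (M : Matrix (Fin m) (Fin k) ℝ) (u : Fin k → ℝ)
    (v : Fin m → ℝ) : M.mulVec u ⬝ᵥ v = u ⬝ᵥ Mᵀ.mulVec v := by
  rw [dotProduct_comm, Matrix.dotProduct_mulVec, ← Matrix.mulVec_transpose,
    dotProduct_comm]

theorem stmt7 {n nc : ℕ} (A : Matrix (Fin n) (Fin n) ℝ) (P : Matrix (Fin n) (Fin nc) ℝ)
    (hA : A.PosDef) (hP : FullColRank P) (b : Fin n → ℝ)
    (Ac : Matrix (Fin nc) (Fin nc) ℝ) (bc : Fin nc → ℝ)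
    (hAc : Ac = Pᵀ * A * P) (hbc : bc = Pᵀ.mulVec b)
    (xc : Fin nc → ℝ) (C hc q : ℝ) (hC : 0 < C) (hhc : 0 < hc) (hq : 0 < q)
    (h1 : enorm Ac (xc - Ac⁻¹.mulVec bc) ≤ C * hc ^ q * enorm Ac (Ac⁻¹.mulVec bc))
    (h2 : enorm A (P.mulVec (Ac⁻¹.mulVec bc) - A⁻¹.mulVec b)
        ≤ C * hc ^ q * enorm A (A⁻¹.mulVec b)) :
    enorm A (P.mulVec xc - A⁻¹.mulVec b)
      ≤ Real.sqrt 2 * (C * hc ^ q) * enorm A (A⁻¹.mulVec b) := by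
  have hAs : Aᵀ = A := by
    have := hA.isHermitian.eq
    rwa [Matrix.conjTranspose_eq_transpose_of_trivial] at this
  have hPinj : ∀ x : Fin nc → ℝ, P.mulVec x = 0 → x = 0 := by
    intro x hx
    have := (Fintype.linearIndependent_iff.mp hP) x ?_
    · exact funext this
    · funext i
      have := congrFun hx i
      simpa [Matrix.mulVec, dotProduct, Finset.sum_apply, mul_comm] using this
  -- quadratic form of A applied to P u equals that of Ac
  have hQP : ∀ u : Fin nc → ℝ,
      A.mulVec (P.mulVec u) ⬝ᵥ (P.mulVec u) = Ac.mulVec u ⬝ᵥ u := by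
    intro u
    rw [Matrix.mulVec_mulVec, dot_aux, Matrix.mulVec_mulVec, Matrix.transpose_mul, hAs,
      ← hAc, dotProduct_comm]
  have hAcPD : Ac.PosDef := by
    refine Matrix.PosDef.of_dotProduct_mulVec_pos ?_ ?_
    · show Acᴴ = Ac
      rw [Matrix.conjTranspose_eq_transpose_of_trivial, hAc, Matrix.transpose_mul,
        Matrix.transpose_mul, Matrix.transpose_transpose, hAs, Matrix.mul_assoc]
    · intro x hx
      have hPx : P.mulVec x ≠ 0 := fun h => hx (hPinj x h)
      have h := hA.dotProduct_mulVec_pos hPx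
      simp only [star_trivial] at h ⊢
      rw [dotProduct_comm, ← hQP]
      rwa [dotProduct_comm] at h
  have hAdet : IsUnit A.det := isUnit_iff_ne_zero.mpr hA.det_pos.ne'
  have hAcdet : IsUnit Ac.det := isUnit_iff_ne_zero.mpr hAcPD.det_pos.ne'
  have hAinv : A * A⁻¹ = 1 := Matrix.mul_nonsing_inv A hAdet
  have hAcinv : Ac * Ac⁻¹ = 1 := Matrix.mul_nonsing_inv Ac hAcdet
  set z := A⁻¹.mulVec b with hz
  set w := Ac⁻¹.mulVec bc with hw
  have hAz : A.mulVec z = b := by rw [hz, Matrix.mulVec_mulVec, hAinv, Matrix.one_mulVec]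
  have hAcw : Ac.mulVec w = bc := by rw [hw, Matrix.mulVec_mulVec, hAcinv, Matrix.one_mulVec]
  have hsymm : ∀ u v : Fin n → ℝ, A.mulVec u ⬝ᵥ v = A.mulVec v ⬝ᵥ u := by
    intro u v
    rw [dot_aux, hAs, dotProduct_comm]
  -- orthogonality
  have horth : ∀ u : Fin nc → ℝ,
      A.mulVec (P.mulVec u) ⬝ᵥ (P.mulVec w - z) = 0 := by
    intro u
    rw [Matrix.mulVec_mulVec, dot_aux, Matrix.transpose_mul, hAs]
    have : (Pᵀ * A).mulVec (P.mulVec w - z) = 0 := by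
      rw [Matrix.mulVec_sub, Matrix.mulVec_mulVec, ← hAc, hAcw,
        ← Matrix.mulVec_mulVec, hAz, hbc, sub_self]
    rw [this, dotProduct_zero]
  -- nonnegativity of quadratic forms
  have hQnn : ∀ v : Fin n → ℝ, 0 ≤ A.mulVec v ⬝ᵥ v := by
    intro v
    have := hA.posSemidef.dotProduct_mulVec_nonneg v
    simpa [dotProduct_comm] using this
  have hQcnn : ∀ v : Fin nc → ℝ, 0 ≤ Ac.mulVec v ⬝ᵥ v := by
    intro v
    have := hAcPD.posSemidef.dotProduct_mulVec_nonneg v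
    simpa [dotProduct_comm] using this
  set K := C * hc ^ q with hKdef
  have hK : 0 ≤ K := by positivity
  -- square the hypotheses
  have hsq : ∀ {m : ℕ} (M : Matrix (Fin m) (Fin m) ℝ) (v : Fin m → ℝ),
      0 ≤ M.mulVec v ⬝ᵥ v → (enorm M v) ^ 2 = M.mulVec v ⬝ᵥ v := by
    intro m M v hv
    rw [_root_.enorm, Real.sq_sqrt hv]
  have h1' : Ac.mulVec (xc - w) ⬝ᵥ (xc - w) ≤ K ^ 2 * (Ac.mulVec w ⬝ᵥ w) := by
    have := mul_self_le_mul_self (Real.sqrt_nonneg _) h1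
    calc Ac.mulVec (xc - w) ⬝ᵥ (xc - w) = (enorm Ac (xc - w)) ^ 2 := (hsq Ac _ (hQcnn _)).symm
      _ ≤ (K * enorm Ac w) ^ 2 := by
          rw [sq, sq]; exact this
      _ = K ^ 2 * (enorm Ac w) ^ 2 := by ring
      _ = K ^ 2 * (Ac.mulVec w ⬝ᵥ w) := by rw [hsq Ac _ (hQcnn _)]
  have h2' : A.mulVec (P.mulVec w - z) ⬝ᵥ (P.mulVec w - z)
      ≤ K ^ 2 * (A.mulVec z ⬝ᵥ z) := by
    have := mul_self_le_mul_self (Real.sqrt_nonneg _) h2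
    calc A.mulVec (P.mulVec w - z) ⬝ᵥ (P.mulVec w - z)
        = (enorm A (P.mulVec w - z)) ^ 2 := (hsq A _ (hQnn _)).symm
      _ ≤ (K * enorm A z) ^ 2 := by rw [sq, sq]; exact this
      _ = K ^ 2 * (enorm A z) ^ 2 := by ring
      _ = K ^ 2 * (A.mulVec z ⬝ᵥ z) := by rw [hsq A _ (hQnn _)]
  -- Pythagoras for e1 + e2
  have hpyth : ∀ (x : Fin n → ℝ) (y : Fin n → ℝ), A.mulVec x ⬝ᵥ y = 0 →
      A.mulVec (x + y) ⬝ᵥ (x + y) = A.mulVec x ⬝ᵥ x + A.mulVec y ⬝ᵥ y := by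
    intro x y hxy
    have hyx : A.mulVec y ⬝ᵥ x = 0 := by rw [hsymm]; exact hxy
    rw [Matrix.mulVec_add, add_dotProduct, dotProduct_add,
      dotProduct_add, hxy, hyx]
    ring
  -- Qc w ≤ Q z
  have hwz : Ac.mulVec w ⬝ᵥ w ≤ A.mulVec z ⬝ᵥ z := by
    have horth' : A.mulVec (P.mulVec w) ⬝ᵥ (z - P.mulVec w) = 0 := by
      have := horth w
      have h' : A.mulVec (P.mulVec w) ⬝ᵥ (z - P.mulVec w)
          = -(A.mulVec (P.mulVec w) ⬝ᵥ (P.mulVec w - z)) := by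
        rw [show z - P.mulVec w = -(P.mulVec w - z) by abel, dotProduct_neg]
      rw [h', this, neg_zero]
    have hdecomp : z = P.mulVec w + (z - P.mulVec w) := by abel
    calc Ac.mulVec w ⬝ᵥ w = A.mulVec (P.mulVec w) ⬝ᵥ (P.mulVec w) := (hQP w).symm
      _ ≤ A.mulVec (P.mulVec w) ⬝ᵥ (P.mulVec w)
          + A.mulVec (z - P.mulVec w) ⬝ᵥ (z - P.mulVec w) := le_add_of_nonneg_right (hQnn _)
      _ = A.mulVec z ⬝ᵥ z := by
          conv_rhs => rw [hdecomp]
          rw [hpyth _ _ horth']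
  -- main estimate
  have hsplit : P.mulVec xc - z = P.mulVec (xc - w) + (P.mulVec w - z) := by
    rw [Matrix.mulVec_sub]; abel
  have hmain : A.mulVec (P.mulVec xc - z) ⬝ᵥ (P.mulVec xc - z)
      ≤ 2 * K ^ 2 * (A.mulVec z ⬝ᵥ z) := by
    rw [hsplit, hpyth _ _ (horth (xc - w)), hQP]
    calc Ac.mulVec (xc - w) ⬝ᵥ (xc - w) + A.mulVec (P.mulVec w - z) ⬝ᵥ (P.mulVec w - z)
        ≤ K ^ 2 * (Ac.mulVec w ⬝ᵥ w) + K ^ 2 * (A.mulVec z ⬝ᵥ z) := add_le_add h1' h2'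
      _ ≤ K ^ 2 * (A.mulVec z ⬝ᵥ z) + K ^ 2 * (A.mulVec z ⬝ᵥ z) := by
          gcongr
      _ = 2 * K ^ 2 * (A.mulVec z ⬝ᵥ z) := by ring
  calc enorm A (P.mulVec xc - z) = Real.sqrt (A.mulVec (P.mulVec xc - z) ⬝ᵥ (P.mulVec xc - z)) := rfl
    _ ≤ Real.sqrt (2 * K ^ 2 * (A.mulVec z ⬝ᵥ z)) := Real.sqrt_le_sqrt hmain
    _ = Real.sqrt 2 * K * enorm A z := by
        rw [Real.sqrt_mul (by positivity), Real.sqrt_mul (by norm_num), Real.sqrt_sq hK]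
        rfl
end

section
/- Let A be an n×n SPD matrix, A_c an n_c×n_c SPD matrix, P an n×n_c matrix with PᵗAP = A_c (Galerkin condition), and let G, T be n×n matrices with T = I − P A_c⁻¹ PᵗA and ‖G‖_A ≤ 1. Suppose ‖(P V_c A_c⁻¹ Pᵗ A + T) G‖_A ≤ ρ for some n_c×n_c matrix V_c and ρ ≥ 0, and let E_c be any n_c×n_c matrix. Then ‖(P (V_c + E_c) A_c⁻¹ Pᵗ A + T) G‖_A ≤ ρ + ‖E_c‖_{A_c}. -/
open Matrix

section Aux
open scoped MatrixOrder

variable {n : ℕ}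

lemma vnorm_eq_norm (x : Fin n → ℝ) :
    vnorm x = ‖(WithLp.equiv 2 (Fin n → ℝ)).symm x‖ := by
  rw [EuclideanSpace.norm_eq]
  unfold vnorm dotProduct
  congr 1
  refine Finset.sum_congr rfl fun i _ => ?_
  rw [WithLp.equiv_symm_apply, WithLp.ofLp_toLp, Real.norm_eq_abs, sq_abs, sq]

lemma symm_dot {B : Matrix (Fin n) (Fin n) ℝ} (hB : Bᵀ = B) (x y : Fin n → ℝ) :
    B.mulVec x ⬝ᵥ y = x ⬝ᵥ B.mulVec y := by
  rw [dotProduct_mulVec, ← mulVec_transpose, hB, dotProduct_comm]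

lemma posdef_transpose {B : Matrix (Fin n) (Fin n) ℝ} (hB : B.PosDef) : Bᵀ = B := by
  rw [← conjTranspose_eq_transpose_of_trivial]; exact hB.isHermitian

lemma enorm_eq_vnorm {A : Matrix (Fin n) (Fin n) ℝ} (hA : A.PosDef) (x : Fin n → ℝ) :
    enorm A x = vnorm ((CFC.sqrt A).mulVec x) := by
  unfold _root_.enorm vnorm
  congr 1
  have hS : CFC.sqrt A * CFC.sqrt A = A := CFC.sqrt_mul_sqrt_self A hA.posSemidef.nonneg
  have hSt : (CFC.sqrt A)ᵀ = CFC.sqrt A := by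
    rw [← conjTranspose_eq_transpose_of_trivial]
    exact (CFC.sqrt_nonneg A).posSemidef.isHermitian
  conv_lhs => rw [← hS]
  rw [← mulVec_mulVec, symm_dot hSt]

end Aux

section Aux2
open scoped MatrixOrder
variable {n : ℕ}

lemma enorm_nonneg (A : Matrix (Fin n) (Fin n) ℝ) (x : Fin n → ℝ) : 0 ≤ enorm A x :=
  Real.sqrt_nonneg _

lemma enormA_add_le {A : Matrix (Fin n) (Fin n) ℝ} (hA : A.PosDef) (x y : Fin n → ℝ) :
    enorm A (x + y) ≤ enorm A x + enorm A y := by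
  rw [enorm_eq_vnorm hA, enorm_eq_vnorm hA, enorm_eq_vnorm hA, mulVec_add,
    vnorm_eq_norm, vnorm_eq_norm, vnorm_eq_norm]
  rw [WithLp.equiv_symm_apply, WithLp.toLp_add]
  exact norm_add_le _ _

lemma enormA_smul {A : Matrix (Fin n) (Fin n) ℝ} (c : ℝ) (x : Fin n → ℝ) :
    enorm A (c • x) = |c| * enorm A x := by
  unfold _root_.enorm
  rw [mulVec_smul, smul_dotProduct, dotProduct_smul, smul_eq_mul, smul_eq_mul, ← mul_assoc,
    ← sq, Real.sqrt_mul (sq_nonneg c), Real.sqrt_sq_eq_abs]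

lemma enormA_zero (A : Matrix (Fin n) (Fin n) ℝ) : enorm A (0 : Fin n → ℝ) = 0 := by
  unfold _root_.enorm
  rw [mulVec_zero, dotProduct_zero, Real.sqrt_zero]

lemma enormA_pos {A : Matrix (Fin n) (Fin n) ℝ} (hA : A.PosDef) {x : Fin n → ℝ} (hx : x ≠ 0) :
    0 < enorm A x := by
  apply Real.sqrt_pos.mpr
  have := hA.dotProduct_mulVec_pos hx
  simpa [dotProduct_comm] using this

lemma exists_ebound {A : Matrix (Fin n) (Fin n) ℝ} (hA : A.PosDef)
    (M : Matrix (Fin n) (Fin n) ℝ) :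
    ∃ C : ℝ, 0 ≤ C ∧ ∀ y, enorm A (M.mulVec y) ≤ C * enorm A y := by
  set S := CFC.sqrt A with hSdef
  have hS : S * S = A := CFC.sqrt_mul_sqrt_self A hA.posSemidef.nonneg
  have hdet : S.det ≠ 0 := by
    intro h
    have : A.det = 0 := by rw [← hS, det_mul, h, mul_zero]
    exact (ne_of_gt hA.det_pos) this
  have hinv : S⁻¹ * S = 1 := nonsing_inv_mul S (isUnit_iff_ne_zero.mpr hdet)
  set f := LinearMap.toContinuousLinearMap (Matrix.toEuclideanLin (S * M * S⁻¹))
  refine ⟨‖f‖, norm_nonneg _, fun y => ?_⟩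
  have key : S.mulVec (M.mulVec y) = (S * M * S⁻¹).mulVec (S.mulVec y) := by
    rw [mulVec_mulVec, mulVec_mulVec, mul_assoc, mul_assoc, hinv, mul_one]
  rw [enorm_eq_vnorm hA, enorm_eq_vnorm hA, key, vnorm_eq_norm, vnorm_eq_norm]
  have h2 := f.le_opNorm ((WithLp.equiv 2 (Fin n → ℝ)).symm (S.mulVec y))
  have h3 : f ((WithLp.equiv 2 (Fin n → ℝ)).symm (S.mulVec y))
      = (WithLp.equiv 2 (Fin n → ℝ)).symm ((S * M * S⁻¹).mulVec (S.mulVec y)) := by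
    rfl
  rwa [h3] at h2

lemma bddAbove_range {A : Matrix (Fin n) (Fin n) ℝ} (hA : A.PosDef)
    (M : Matrix (Fin n) (Fin n) ℝ) :
    BddAbove (Set.range fun x : {x : Fin n → ℝ // enorm A x = 1} =>
      enorm A (M.mulVec x.1)) := by
  obtain ⟨C, hC0, hC⟩ := exists_ebound hA M
  refine ⟨C, ?_⟩
  rintro v ⟨x, rfl⟩
  simpa [x.2] using hC x.1

lemma enorm_mulVec_le {A : Matrix (Fin n) (Fin n) ℝ} (hA : A.PosDef)
    (M : Matrix (Fin n) (Fin n) ℝ) (y : Fin n → ℝ) :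
    enorm A (M.mulVec y) ≤ eOpNorm A M * enorm A y := by
  by_cases hy : y = 0
  · subst hy
    rw [mulVec_zero, enormA_zero, mul_zero]
  · have ht : 0 < enorm A y := enormA_pos hA hy
    set t := enorm A y
    have hu : enorm A (t⁻¹ • y) = 1 := by
      rw [enormA_smul, abs_of_pos (inv_pos.mpr ht), inv_mul_cancel₀ (ne_of_gt ht)]
    have hle : enorm A (M.mulVec (t⁻¹ • y)) ≤ eOpNorm A M :=
      le_ciSup (bddAbove_range hA M) (⟨t⁻¹ • y, hu⟩ : {x : Fin n → ℝ // enorm A x = 1})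
    rw [mulVec_smul, enormA_smul, abs_of_pos (inv_pos.mpr ht)] at hle
    calc enorm A (M.mulVec y) = t * (t⁻¹ * enorm A (M.mulVec y)) := by
          field_simp
      _ ≤ t * eOpNorm A M := by
          exact mul_le_mul_of_nonneg_left hle (le_of_lt ht)
      _ = eOpNorm A M * t := mul_comm _ _

lemma eOpNorm_nonneg (A M : Matrix (Fin n) (Fin n) ℝ) : 0 ≤ eOpNorm A M :=
  Real.iSup_nonneg fun _ => Real.sqrt_nonneg _

lemma eOpNorm_le {A M : Matrix (Fin n) (Fin n) ℝ} {c : ℝ} (hc : 0 ≤ c)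
    (h : ∀ x : Fin n → ℝ, enorm A x = 1 → enorm A (M.mulVec x) ≤ c) :
    eOpNorm A M ≤ c :=
  Real.iSup_le (fun x => h x.1 x.2) hc

end Aux2

section Aux3
variable {n nc : ℕ} {A : Matrix (Fin n) (Fin n) ℝ} {Ac : Matrix (Fin nc) (Fin nc) ℝ}
  {P : Matrix (Fin n) (Fin nc) ℝ}

lemma gal_dot (hGal : Pᵀ * A * P = Ac) (w : Fin nc → ℝ) :
    A.mulVec (P.mulVec w) ⬝ᵥ (P.mulVec w) = Ac.mulVec w ⬝ᵥ w := by
  rw [dotProduct_mulVec, ← mulVec_transpose, mulVec_mulVec, mulVec_mulVec, hGal]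

lemma enorm_P (hGal : Pᵀ * A * P = Ac) (w : Fin nc → ℝ) :
    enorm A (P.mulVec w) = enorm Ac w := by
  unfold _root_.enorm
  rw [gal_dot hGal]

lemma proj_le (hA : A.PosDef) (hAc : Ac.PosDef) (hGal : Pᵀ * A * P = Ac) (y : Fin n → ℝ) :
    enorm Ac ((Ac⁻¹ * Pᵀ * A).mulVec y) ≤ enorm A y := by
  set z := (Ac⁻¹ * Pᵀ * A).mulVec y with hz
  set w := P.mulVec z with hwdef
  set d := y - w with hd
  have hAcinv : Ac * Ac⁻¹ = 1 :=
    mul_nonsing_inv _ (isUnit_iff_ne_zero.mpr (ne_of_gt hAc.det_pos))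
  have key : (Pᵀ * A).mulVec w = (Pᵀ * A).mulVec y := by
    rw [hwdef, mulVec_mulVec, hGal, hz, mulVec_mulVec, ← Matrix.mul_assoc,
      ← Matrix.mul_assoc, hAcinv, Matrix.one_mul]
  have hcross : A.mulVec d ⬝ᵥ w = 0 := by
    rw [hwdef, dotProduct_mulVec, ← mulVec_transpose, mulVec_mulVec, hd, mulVec_sub, key,
      sub_self, zero_dotProduct]
  have hAt : Aᵀ = A := posdef_transpose hA
  have hyd : y = w + d := by rw [hd]; ring
  have expand : A.mulVec y ⬝ᵥ y = A.mulVec w ⬝ᵥ w + A.mulVec d ⬝ᵥ d := by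
    have h1 : A.mulVec w ⬝ᵥ d = 0 := by
      rw [symm_dot hAt, dotProduct_comm]; exact hcross
    conv_lhs => rw [hyd]
    rw [mulVec_add, add_dotProduct, dotProduct_add, dotProduct_add, h1, hcross]
    ring
  have hdd : 0 ≤ A.mulVec d ⬝ᵥ d := by
    have := hA.posSemidef.dotProduct_mulVec_nonneg d
    simpa [dotProduct_comm] using this
  unfold _root_.enorm
  apply Real.sqrt_le_sqrt
  rw [← gal_dot hGal z, ← hwdef, expand]
  linarith

end Aux3

theorem stmt13 {n nc : ℕ} (A : Matrix (Fin n) (Fin n) ℝ)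
    (Ac : Matrix (Fin nc) (Fin nc) ℝ) (P : Matrix (Fin n) (Fin nc) ℝ)
    (G T : Matrix (Fin n) (Fin n) ℝ) (Vc Ec : Matrix (Fin nc) (Fin nc) ℝ)
    (ρ : ℝ) (hρ : 0 ≤ ρ)
    (hA : A.PosDef) (hAc : Ac.PosDef) (hGal : Pᵀ * A * P = Ac) (hP : FullColRank P)
    (hT : T = 1 - P * Ac⁻¹ * Pᵀ * A)
    (hG : eOpNorm A G ≤ 1)
    (hV : eOpNorm A ((P * Vc * Ac⁻¹ * Pᵀ * A + T) * G) ≤ ρ) :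
    eOpNorm A ((P * (Vc + Ec) * Ac⁻¹ * Pᵀ * A + T) * G) ≤ ρ + eOpNorm Ac Ec := by
  set M1 := (P * Vc * Ac⁻¹ * Pᵀ * A + T) * G with hM1
  set M2 := P * Ec * Ac⁻¹ * Pᵀ * A * G with hM2
  have hsplit : (P * (Vc + Ec) * Ac⁻¹ * Pᵀ * A + T) * G = M1 + M2 := by
    rw [hM1, hM2]
    simp only [Matrix.mul_add, Matrix.add_mul, Matrix.mul_assoc]
    abel
  rw [hsplit]
  apply eOpNorm_le (add_nonneg hρ (eOpNorm_nonneg _ _))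
  intro x hx
  rw [add_mulVec]
  refine le_trans (enormA_add_le hA _ _) ?_
  have h1 : enorm A (M1.mulVec x) ≤ ρ := by
    calc enorm A (M1.mulVec x) ≤ eOpNorm A M1 * enorm A x := enorm_mulVec_le hA _ _
      _ = eOpNorm A M1 := by rw [hx, mul_one]
      _ ≤ ρ := hV
  have hGx : enorm A (G.mulVec x) ≤ 1 := by
    calc enorm A (G.mulVec x) ≤ eOpNorm A G * enorm A x := enorm_mulVec_le hA _ _
      _ = eOpNorm A G := by rw [hx, mul_one]
      _ ≤ 1 := hG
  have hx2 : M2.mulVec x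
      = P.mulVec (Ec.mulVec ((Ac⁻¹ * Pᵀ * A).mulVec (G.mulVec x))) := by
    rw [mulVec_mulVec, mulVec_mulVec, mulVec_mulVec, hM2]
    congr 1
    simp only [Matrix.mul_assoc]
  have h2 : enorm A (M2.mulVec x) ≤ eOpNorm Ac Ec := by
    set z := (Ac⁻¹ * Pᵀ * A).mulVec (G.mulVec x) with hzdef
    have hz1 : enorm Ac z ≤ 1 := le_trans (proj_le hA hAc hGal (G.mulVec x)) hGx
    calc enorm A (M2.mulVec x) = enorm Ac (Ec.mulVec z) := by rw [hx2, enorm_P hGal]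
      _ ≤ eOpNorm Ac Ec * enorm Ac z := enorm_mulVec_le hAc _ _
      _ ≤ eOpNorm Ac Ec * 1 := mul_le_mul_of_nonneg_left hz1 (eOpNorm_nonneg _ _)
      _ = eOpNorm Ac Ec := mul_one _
  linarith
end
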